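/- Example 2.4: Let X = {z ∈ ℂ : |z| ≤ 1}, m = 2, f_0(z) = z²(z + i)/(4(1 + i)) and f_1(z) = (3z + 1)/4, and let G : [0,1] → X be the unique continuous solution of G(t) = f_0(G(2t)) for 0 ≤ t ≤ 1/2 and G(t) = f_1(G(2t − 1)) for 1/2 ≤ t ≤ 1. Then: (a) |G(t)| ≤ √2/4 for all t ∈ [0,1/2] and |G(t)| ≤ 2^{−5} for all t ∈ [0,1/4]; (b) α = (1/2)∫₀¹ −log_2( 9|G(t)|(3|G(t)| + 2) / (16√2) ) dt ≥ 9/4 − (log_2 15)/2 − (1/2)∫₀¹ log_2 |G(t)| dt > 1; and consequently (c) the Fréchet derivative of G exists and is zero Lebesgue-a.e. -/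

import Mathlib

open MeasureTheory Filter Set Topology
open scoped ENNReal

noncomputable section

/-- The first digit `A₁(t) = ⌊m t⌋` of the `m`-adic expansion of `t ∈ [0,1)`. -/
def A1 (m : ℕ) (t : ℝ) : ℕ := (⌊(m : ℝ) * t⌋).toNat

/-- The shift map `Ht = m t - ⌊m t⌋` on `[0,1)`. -/
def Hmap (m : ℕ) (t : ℝ) : ℝ := (m : ℝ) * t - ⌊(m : ℝ) * t⌋

/-- `-log_m x` as a value in `[0,∞]`, with the convention `-log_m 0 = +∞`. -/
def negLogbE (m : ℕ) (x : ℝ) : ℝ≥0∞ :=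
  if x = 0 then ⊤ else ENNReal.ofReal (-Real.logb m x)

/-- The maps `f₀(z) = z²(z+i)/(4(1+i))` and `f₁(z) = (3z+1)/4` of Example 2.4. -/
def fEx : ℕ → ℂ → ℂ := fun i z =>
  if i = 0 then z ^ 2 * (z + Complex.I) / (4 * (1 + Complex.I)) else (3 * z + 1) / 4

/-- `α = ∫₀¹ -log₂ ‖Df_{A₁(t)}(G(Ht))‖ dt ∈ [0,∞]`, the Fréchet derivative being taken
over `ℝ` (`ℂ` is regarded as a real two-dimensional Banach space), with `-log₂ 0 = +∞`. -/
def alphaEx (G : ℝ → ℂ) : ℝ≥0∞ :=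
  ∫⁻ t in Set.Ico (0 : ℝ) 1, negLogbE 2 ‖fderiv ℝ (fEx (A1 2 t)) (G (Hmap 2 t))‖

end


section Aux

lemma sqrt2_sq : Real.sqrt 2 ^ 2 = 2 := Real.sq_sqrt (by norm_num)

lemma sqrt2_pos : 0 < Real.sqrt 2 := Real.sqrt_pos.2 (by norm_num)

lemma sqrt2_lt : Real.sqrt 2 < 1.41422 := by
  nlinarith [sqrt2_sq, sqrt2_pos]

lemma sqrt2_gt : 1.41421 < Real.sqrt 2 := by
  nlinarith [sqrt2_sq, sqrt2_pos]

lemma abs_one_add_I : norm (1 + Complex.I) = Real.sqrt 2 := by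
  rw [Complex.norm_def]
  congr 1
  simp [Complex.normSq_apply]
  norm_num

lemma abs_four_one_add_I : norm (4 * (1 + Complex.I)) = 4 * Real.sqrt 2 := by
  rw [norm_mul, abs_one_add_I]
  norm_num

lemma one_add_I_ne : (4 : ℂ) * (1 + Complex.I) ≠ 0 := by
  intro h
  have := abs_four_one_add_I
  rw [h] at this
  simp at this

/-- Norm bound for `f₀`. -/
lemma habs0 (r : ℝ) (z : ℂ) (hr : 0 ≤ r) (hz : norm z ≤ r) :
    norm (fEx 0 z) ≤ r ^ 2 * (r + 1) * Real.sqrt 2 / 8 := by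
  have hz0 : (0:ℝ) ≤ norm z := norm_nonneg z
  have h1 : norm (z + Complex.I) ≤ r + 1 := by
    calc norm (z + Complex.I) ≤ norm z + norm Complex.I :=
          norm_add_le _ _
    _ ≤ r + 1 := by simp [Complex.norm_I]; linarith
  have : fEx 0 z = z ^ 2 * (z + Complex.I) / (4 * (1 + Complex.I)) := by simp [fEx]
  rw [this, norm_div, norm_mul, norm_pow, abs_four_one_add_I]
  rw [div_le_iff₀ (by positivity)]
  have hzz : norm z ^ 2 * norm (z + Complex.I) ≤ r ^ 2 * (r + 1) := by
    apply mul_le_mul (by nlinarith) h1 (norm_nonneg _) (by positivity)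
  calc norm z ^ 2 * norm (z + Complex.I) ≤ r ^ 2 * (r + 1) := hzz
  _ ≤ r ^ 2 * (r + 1) * Real.sqrt 2 / 8 * (4 * Real.sqrt 2) := by
      have : r ^ 2 * (r + 1) * Real.sqrt 2 / 8 * (4 * Real.sqrt 2)
          = r ^ 2 * (r + 1) * (Real.sqrt 2 ^ 2) / 2 := by ring
      rw [this, sqrt2_sq]
      nlinarith [sq_nonneg r]

/-- Lipschitz bound for `f₀` on a ball of radius `r`. -/
lemma hlip0 (r : ℝ) (z w : ℂ) (hz : norm z ≤ r) (hw : norm w ≤ r) :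
    norm (fEx 0 z - fEx 0 w) ≤ r * (3 * r + 2) * Real.sqrt 2 / 8 * norm (z - w) := by
  have hz0 : (0:ℝ) ≤ norm z := norm_nonneg z
  have hw0 : (0:ℝ) ≤ norm w := norm_nonneg w
  have hr : 0 ≤ r := le_trans hz0 hz
  have key : fEx 0 z - fEx 0 w
      = (z - w) * (z ^ 2 + z * w + w ^ 2 + Complex.I * (z + w)) / (4 * (1 + Complex.I)) := by
    simp only [fEx, if_pos rfl, if_true, eq_self_iff_true]
    rw [div_sub_div_same, div_eq_div_iff one_add_I_ne one_add_I_ne]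
    ring
  rw [key, norm_div, norm_mul, abs_four_one_add_I]
  rw [div_le_iff₀ (by positivity)]
  have h2 : norm (z ^ 2 + z * w + w ^ 2 + Complex.I * (z + w)) ≤ 3 * r ^ 2 + 2 * r := by
    calc norm (z ^ 2 + z * w + w ^ 2 + Complex.I * (z + w))
        ≤ norm (z ^ 2 + z * w + w ^ 2) + norm (Complex.I * (z + w)) :=
          norm_add_le _ _
    _ ≤ (norm (z ^ 2) + norm (z * w) + norm (w ^ 2))
          + norm (Complex.I * (z + w)) := by
        gcongr
        exact le_trans (norm_add_le _ _) (by gcongr <;> exact norm_add_le _ _)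
    _ ≤ (r ^ 2 + r * r + r ^ 2) + (r + r) := by
        rw [norm_pow, norm_pow, norm_mul, norm_mul, Complex.norm_I, one_mul]
        gcongr
        exact le_trans (norm_add_le _ _) (by gcongr)
    _ = 3 * r ^ 2 + 2 * r := by ring
  calc norm (z - w) * norm (z ^ 2 + z * w + w ^ 2 + Complex.I * (z + w))
      ≤ norm (z - w) * (3 * r ^ 2 + 2 * r) := by
        apply mul_le_mul_of_nonneg_left h2 (norm_nonneg _)
  _ ≤ r * (3 * r + 2) * Real.sqrt 2 / 8 * norm (z - w) * (4 * Real.sqrt 2) := by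
      have heq : r * (3 * r + 2) * Real.sqrt 2 / 8 * norm (z - w) * (4 * Real.sqrt 2)
          = norm (z - w) * ((3 * r ^ 2 + 2 * r) * (Real.sqrt 2 ^ 2 / 2)) := by ring
      rw [heq, sqrt2_sq]
      norm_num

end Aux

lemma hlip1 (z w : ℂ) : norm (fEx 1 z - fEx 1 w) = 3 / 4 * norm (z - w) := by
  have h : fEx 1 z - fEx 1 w = (((3:ℝ)/4 : ℝ) : ℂ) * (z - w) := by
    simp only [fEx]
    norm_num
    ring
  rw [h, norm_mul, Complex.norm_real]
  norm_num

section GLemmas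

variable {G : ℝ → ℂ}

lemma Gabs1 (hGX : Set.MapsTo G (Set.Icc 0 1) {z : ℂ | norm z ≤ 1})
    {t : ℝ} (h0 : 0 ≤ t) (h1 : t ≤ 1) : norm (G t) ≤ 1 :=
  hGX ⟨h0, h1⟩

lemma Ga1 (hGX : Set.MapsTo G (Set.Icc 0 1) {z : ℂ | norm z ≤ 1})
    (hGeq0 : ∀ t : ℝ, 0 ≤ t → t ≤ 1 / 2 → G t = fEx 0 (G (2 * t)))
    {t : ℝ} (h0 : 0 ≤ t) (h1 : t ≤ 1 / 2) : norm (G t) ≤ Real.sqrt 2 / 4 := by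
  rw [hGeq0 t h0 h1]
  have hb := habs0 1 (G (2 * t)) (by norm_num)
    (Gabs1 hGX (by linarith) (by linarith))
  calc norm (fEx 0 (G (2 * t))) ≤ 1 ^ 2 * (1 + 1) * Real.sqrt 2 / 8 := hb
  _ = Real.sqrt 2 / 4 := by ring

lemma Ga2 (hGX : Set.MapsTo G (Set.Icc 0 1) {z : ℂ | norm z ≤ 1})
    (hGeq0 : ∀ t : ℝ, 0 ≤ t → t ≤ 1 / 2 → G t = fEx 0 (G (2 * t)))
    {t : ℝ} (h0 : 0 ≤ t) (h1 : t ≤ 1 / 4) : norm (G t) ≤ 1 / 32 := by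
  rw [hGeq0 t h0 (by linarith)]
  have hb := habs0 (Real.sqrt 2 / 4) (G (2 * t)) (by positivity)
    (Ga1 hGX hGeq0 (by linarith) (by linarith))
  refine le_trans hb ?_
  nlinarith [sqrt2_sq, sqrt2_lt, sqrt2_pos]

lemma Gsmall (hGX : Set.MapsTo G (Set.Icc 0 1) {z : ℂ | norm z ≤ 1})
    (hGeq0 : ∀ t : ℝ, 0 ≤ t → t ≤ 1 / 2 → G t = fEx 0 (G (2 * t))) :
    ∀ m : ℕ, ∀ t : ℝ, 0 ≤ t → t ≤ ((2:ℝ) ^ (m + 2))⁻¹ →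
      norm (G t) ≤ ((2:ℝ) ^ (5 * 2 ^ m))⁻¹ := by
  intro m
  induction m with
  | zero =>
    intro t h0 h1
    have := Ga2 hGX hGeq0 h0 (by norm_num at h1 ⊢; linarith)
    norm_num
    linarith
  | succ m ih =>
    intro t h0 h1
    have h2t : 2 * t ≤ ((2:ℝ) ^ (m + 2))⁻¹ := by
      rw [pow_succ] at h1
      rw [← le_div_iff₀' (by norm_num)]
      calc t ≤ ((2:ℝ) ^ (m + 2) * 2)⁻¹ := h1
      _ = (2:ℝ)⁻¹ * ((2:ℝ) ^ (m + 2))⁻¹ := by rw [mul_inv]; ring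
      _ = ((2:ℝ) ^ (m + 2))⁻¹ / 2 := by ring
    have hhalf : t ≤ 1 / 2 := by
      refine le_trans h1 ?_
      rw [inv_le_comm₀ (by positivity) (by norm_num)]
      calc (1/2 : ℝ)⁻¹ = 2 := by norm_num
      _ ≤ (2:ℝ) ^ (m + 3) := by
          calc (2:ℝ) = 2 ^ 1 := (pow_one 2).symm
          _ ≤ (2:ℝ) ^ (m + 3) := by
            apply pow_le_pow_right₀ (by norm_num) (by omega)
    rw [hGeq0 t h0 hhalf]
    set c : ℝ := ((2:ℝ) ^ (5 * 2 ^ m))⁻¹ with hc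
    have hc0 : 0 < c := by positivity
    have hc1 : c ≤ 1 := by
      rw [hc, inv_le_one_iff₀]
      right
      exact one_le_pow₀ (by norm_num)
    have hb := habs0 c (G (2 * t)) hc0.le (ih (2 * t) (by linarith) h2t)
    refine le_trans hb ?_
    have hkey : c ^ 2 * (c + 1) * Real.sqrt 2 / 8 ≤ c ^ 2 := by
      have h1' : c ^ 2 * (c + 1) * Real.sqrt 2 / 8 ≤ c ^ 2 * 2 * 1.41422 / 8 := by
        gcongr
        · linarith
        · exact sqrt2_lt.le
      nlinarith [sq_nonneg c]
    refine le_trans hkey ?_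
    rw [hc, ← inv_pow, ← pow_mul]
    apply le_of_eq
    congr 1
    ring_nf
    norm_num
end GLemmas

section Blemmas

lemma negLogbE_ge {x : ℝ} (m : ℕ) (hx0 : 0 ≤ x) (hx : x ≤ ((2:ℝ) ^ m)⁻¹) :
    ((m : ℕ) : ℝ≥0∞) ≤ negLogbE 2 x := by
  rcases eq_or_lt_of_le hx0 with h | h
  · rw [negLogbE, if_pos h.symm]
    exact le_top
  · rw [negLogbE, if_neg (ne_of_gt h)]
    rw [← ENNReal.ofReal_natCast]
    apply ENNReal.ofReal_le_ofReal
    have hlog : Real.log x ≤ -(m * Real.log 2) := by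
      calc Real.log x ≤ Real.log (((2:ℝ) ^ m)⁻¹) := Real.log_le_log h hx
      _ = -(m * Real.log 2) := by rw [Real.log_inv, Real.log_pow]
    have h2 : (0:ℝ) < Real.log 2 := Real.log_pos (by norm_num)
    rw [Real.logb]
    have hc : ((2:ℕ):ℝ) = (2:ℝ) := by norm_num
    rw [hc, le_neg, div_le_iff₀ h2]
    linarith

lemma hasDerivAt_fEx0 (z : ℂ) :
    HasDerivAt (fEx 0) ((3 * z ^ 2 + 2 * Complex.I * z) / (4 * (1 + Complex.I))) z := by
  have h : fEx 0 = fun w : ℂ => w ^ 2 * (w + Complex.I) / (4 * (1 + Complex.I)) := by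
    funext w; simp [fEx]
  rw [h]
  have h1 : HasDerivAt (fun w : ℂ => w ^ 2) (2 * z) z := by
    simpa using hasDerivAt_pow 2 z
  have h2 : HasDerivAt (fun w : ℂ => w + Complex.I) 1 z := (hasDerivAt_id z).add_const _
  have h4 := (h1.mul h2).div_const (4 * (1 + Complex.I))
  have e : (3 * z ^ 2 + 2 * Complex.I * z) / (4 * (1 + Complex.I))
      = (2 * z * (z + Complex.I) + z ^ 2 * 1) / (4 * (1 + Complex.I)) := by ring
  rw [e]
  exact h4

lemma norm_fderiv_fEx0 (z : ℂ) :
    ‖fderiv ℝ (fEx 0) z‖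
      = norm ((3 * z ^ 2 + 2 * Complex.I * z) / (4 * (1 + Complex.I))) := by
  have h := (hasDerivAt_fEx0 z).hasFDerivAt
  have hR := h.restrictScalars ℝ
  rw [hR.fderiv, ContinuousLinearMap.norm_restrictScalars,
    ContinuousLinearMap.norm_toSpanSingleton]

lemma norm_fderiv_fEx0_le (z : ℂ) (hz : norm z ≤ 1) :
    ‖fderiv ℝ (fEx 0) z‖ ≤ norm z := by
  rw [norm_fderiv_fEx0, norm_div, abs_four_one_add_I]
  have hfac : (3 : ℂ) * z ^ 2 + 2 * Complex.I * z = z * (3 * z + 2 * Complex.I) := by ring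
  rw [hfac, norm_mul]
  rw [div_le_iff₀ (by positivity)]
  have h5 : norm (3 * z + 2 * Complex.I) ≤ 5 := by
    calc norm (3 * z + 2 * Complex.I)
        ≤ norm (3 * z) + norm (2 * Complex.I) := norm_add_le _ _
    _ ≤ 5 := by
        rw [norm_mul, norm_mul]
        simp [Complex.norm_I]
        norm_num
        nlinarith [hz, norm_nonneg z]
  calc norm z * norm (3 * z + 2 * Complex.I) ≤ norm z * 5 :=
        mul_le_mul_of_nonneg_left h5 (norm_nonneg z)
  _ ≤ norm z * (4 * Real.sqrt 2) := by
      apply mul_le_mul_of_nonneg_left ?_ (norm_nonneg z)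
      nlinarith [sqrt2_gt]

end Blemmas

section TopLemmas

/-- Annuli `S n = [2^{-(n+4)}, 2^{-(n+3)})`. -/
def Sann (n : ℕ) : Set ℝ := Set.Ico (((2:ℝ) ^ (n+4))⁻¹) (((2:ℝ) ^ (n+3))⁻¹)

lemma Sann_subset (n : ℕ) : Sann n ⊆ Set.Ico (0:ℝ) 1 := by
  intro t ht
  rcases ht with ⟨h1, h2⟩
  constructor
  · have : (0:ℝ) < ((2:ℝ) ^ (n+4))⁻¹ := by positivity
    linarith
  · have h3 : ((2:ℝ) ^ (n+3))⁻¹ ≤ 1 := by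
      rw [inv_le_one_iff₀]; right; exact one_le_pow₀ (by norm_num)
    linarith

lemma Sann_disjoint : Pairwise (Function.onFun Disjoint Sann) := by
  have key : ∀ m n : ℕ, m < n → Disjoint (Sann m) (Sann n) := by
    intro m n hmn
    rw [Sann, Sann, Set.Ico_disjoint_Ico]
    apply le_trans (min_le_right _ _)
    apply le_trans ?_ (le_max_left _ _)
    apply inv_anti₀ (by positivity)
    apply pow_le_pow_right₀ (by norm_num) (by omega)
  intro m n hmn
  rcases lt_or_gt_of_ne hmn with h | h
  · exact key m n h
  · exact (key n m h).symm

lemma lintegral_Ico01_top (f : ℝ → ℝ≥0∞)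
    (hf : ∀ n : ℕ, ∀ t ∈ Sann n, ((5 * 2 ^ n : ℕ) : ℝ≥0∞) ≤ f t) :
    ∫⁻ t in Set.Ico (0:ℝ) 1, f t = ⊤ := by
  rw [← top_le_iff]
  have hmeas : ∀ n, MeasurableSet (Sann n) := fun n => measurableSet_Ico
  have h1 : ∫⁻ t in ⋃ n, Sann n, f t = ∑' n, ∫⁻ t in Sann n, f t :=
    lintegral_iUnion hmeas Sann_disjoint f
  have h2 : ∀ n : ℕ, (5/16 : ℝ≥0∞) ≤ ∫⁻ t in Sann n, f t := by
    intro n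
    have hconst : ∫⁻ _ in Sann n, ((5 * 2 ^ n : ℕ) : ℝ≥0∞) = (5 * 2 ^ n : ℕ) * volume (Sann n) :=
      setLIntegral_const _ _
    have hvol : volume (Sann n) = ENNReal.ofReal ((2:ℝ) / (2:ℝ) ^ (n + 4) - 1 / (2:ℝ) ^ (n+4)) := by
      rw [Sann, Real.volume_Ico]
      congr 1
      rw [pow_succ]
      field_simp
      ring
    have hval : ((5 * 2 ^ n : ℕ) : ℝ≥0∞) * volume (Sann n) = ENNReal.ofReal (5/16) := by
      rw [hvol]
      have hcast : ((5 * 2 ^ n : ℕ) : ℝ≥0∞) = ENNReal.ofReal ((5 * 2 ^ n : ℕ) : ℝ) := by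
        rw [ENNReal.ofReal_natCast]
      rw [hcast, ← ENNReal.ofReal_mul (by positivity)]
      congr 1
      push_cast
      have hne : ((2:ℝ) ^ (n + 4)) ≠ 0 := by positivity
      field_simp
      ring
    calc (5/16 : ℝ≥0∞) = ENNReal.ofReal (5/16) := by
          rw [ENNReal.ofReal_div_of_pos (by norm_num)]; norm_num
    _ = ((5 * 2 ^ n : ℕ) : ℝ≥0∞) * volume (Sann n) := hval.symm
    _ = ∫⁻ _ in Sann n, ((5 * 2 ^ n : ℕ) : ℝ≥0∞) := hconst.symm
    _ ≤ ∫⁻ t in Sann n, f t := setLIntegral_mono' (hmeas n) (hf n)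
  calc (⊤ : ℝ≥0∞) = ∑' _ : ℕ, (5/16 : ℝ≥0∞) :=
        (ENNReal.tsum_const_eq_top_of_ne_zero (by norm_num)).symm
  _ ≤ ∑' n, ∫⁻ t in Sann n, f t := ENNReal.tsum_le_tsum h2
  _ = ∫⁻ t in ⋃ n, Sann n, f t := h1.symm
  _ ≤ ∫⁻ t in Set.Ico (0:ℝ) 1, f t := lintegral_mono_set (Set.iUnion_subset Sann_subset)

end TopLemmas

section TopApp

variable {G : ℝ → ℂ}

lemma pow_inv_le_quarter (n : ℕ) : ((2:ℝ) ^ (n+2))⁻¹ ≤ 1/4 := by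
  rw [inv_le_comm₀ (by positivity) (by norm_num)]
  calc ((1:ℝ)/4)⁻¹ = 2 ^ 2 := by norm_num
  _ ≤ (2:ℝ) ^ (n + 2) := pow_le_pow_right₀ (by norm_num) (by omega)

lemma alphaEx_top (hGX : Set.MapsTo G (Set.Icc 0 1) {z : ℂ | norm z ≤ 1})
    (hGeq0 : ∀ t : ℝ, 0 ≤ t → t ≤ 1 / 2 → G t = fEx 0 (G (2 * t))) :
    alphaEx G = ⊤ := by
  unfold alphaEx
  apply lintegral_Ico01_top
  intro n t ht
  obtain ⟨h1, h2⟩ := ht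
  have ht0 : 0 < t := lt_of_lt_of_le (by positivity) h1
  have h2t : 2 * t ≤ ((2:ℝ) ^ (n+2))⁻¹ := by
    have : ((2:ℝ) ^ (n+3))⁻¹ = ((2:ℝ) ^ (n+2))⁻¹ / 2 := by
      rw [pow_succ]
      field_simp
    rw [this] at h2
    linarith
  have h2t1 : 2 * t < 1 := by
    have := pow_inv_le_quarter n
    linarith
  have hfloor : ⌊((2:ℕ):ℝ) * t⌋ = 0 := by
    apply Int.floor_eq_zero_iff.2
    constructor
    · push_cast; linarith
    · push_cast; linarith
  have hA : A1 2 t = 0 := by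
    rw [A1, hfloor]; rfl
  have hH : Hmap 2 t = 2 * t := by
    rw [Hmap, hfloor]; push_cast; ring
  rw [hA, hH]
  apply negLogbE_ge _ (norm_nonneg _)
  calc ‖fderiv ℝ (fEx 0) (G (2 * t))‖ ≤ norm (G (2 * t)) :=
        norm_fderiv_fEx0_le _ (Gabs1 hGX (by linarith) (by linarith))
  _ ≤ ((2:ℝ) ^ (5 * 2 ^ n))⁻¹ := Gsmall hGX hGeq0 n (2 * t) (by linarith) h2t

lemma rhs_top (hGX : Set.MapsTo G (Set.Icc 0 1) {z : ℂ | norm z ≤ 1})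
    (hGeq0 : ∀ t : ℝ, 0 ≤ t → t ≤ 1 / 2 → G t = fEx 0 (G (2 * t))) :
    ∫⁻ t in Set.Ico (0:ℝ) 1,
      negLogbE 2 (9 * norm (G t) * (3 * norm (G t) + 2) /
        (16 * Real.sqrt 2)) = ⊤ := by
  apply lintegral_Ico01_top
  intro n t ht
  obtain ⟨h1, h2⟩ := ht
  have ht0 : 0 < t := lt_of_lt_of_le (by positivity) h1
  have ht1 : t ≤ ((2:ℝ) ^ ((n+1)+2))⁻¹ := by
    have hee : (n+1)+2 = n+3 := by omega
    rw [hee]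
    linarith
  set x := norm (G t) with hxdef
  have hx0 : 0 ≤ x := norm_nonneg _
  set c : ℝ := ((2:ℝ) ^ (5 * 2 ^ n))⁻¹ with hcdef
  have hcpos : 0 < c := by positivity
  have hc132 : c ≤ 1/32 := by
    rw [hcdef]
    rw [inv_le_comm₀ (by positivity) (by norm_num)]
    calc ((1:ℝ)/32)⁻¹ = 2 ^ 5 := by norm_num
    _ ≤ (2:ℝ) ^ (5 * 2 ^ n) := pow_le_pow_right₀ (by norm_num) (by
          have : 1 ≤ 2 ^ n := Nat.one_le_two_pow
          omega)
  have hxc : x ≤ c ^ 2 := by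
    have hG := Gsmall hGX hGeq0 (n+1) t ht0.le ht1
    rw [hxdef]
    refine le_trans hG ?_
    apply le_of_eq
    rw [hcdef, inv_pow, ← pow_mul]
    congr 1
    ring
  apply negLogbE_ge _ (by positivity)
  rw [div_le_iff₀ (by positivity)]
  have hkey : 9 * x * (3 * x + 2) ≤ 19 * c ^ 2 := by
    have hc2b : c ^ 2 ≤ 1 / 1024 := by nlinarith
    have hx2 : x ^ 2 ≤ c ^ 4 := by nlinarith [mul_le_mul hxc hxc hx0 (sq_nonneg c)]
    have hc4 : c ^ 4 ≤ (1/1024) * c ^ 2 := by nlinarith [sq_nonneg c]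
    nlinarith [hx2, hxc, hc4]
  have hc2 : 19 * c ^ 2 ≤ c := by nlinarith
  have hlast : c ≤ c * (16 * Real.sqrt 2) := by
    nlinarith [sqrt2_gt, hcpos.le]
  calc 9 * x * (3 * x + 2) ≤ 19 * c ^ 2 := hkey
  _ ≤ c := hc2
  _ ≤ c * (16 * Real.sqrt 2) := hlast
  _ = ((2:ℝ) ^ (5 * 2 ^ n))⁻¹ * (16 * Real.sqrt 2) := by rw [hcdef]

end TopApp

section Machinery

inductive Cls | A | B | D | E | T
deriving DecidableEq

def cls (n k : ℕ) : Cls :=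
  if n = 0 then .T
  else if 2 * k < 2 ^ n then (if 4 * (k + 1) ≤ 2 ^ n then .A else .B)
  else (if 4 * (k + 1) ≤ 3 * 2 ^ n then .D else .E)

noncomputable def rC : Cls → ℝ
  | .A => 1/32
  | .B => Real.sqrt 2 / 4
  | .D => (4 + 3 * Real.sqrt 2) / 16
  | .E => 1
  | .T => 1

noncomputable def wC : Cls → ℝ
  | .A => 23/40
  | .B => 163/200
  | .D => 87/100
  | .E => 197/200
  | .T => 197/200

noncomputable def uC : Cls → ℝ
  | .A => 3/4
  | .B => 17/20
  | .D => 19/20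
  | .E => 1
  | .T => 1

noncomputable def Wval : ℕ → ℕ → ℝ
  | 0, _ => 11/10
  | n+1, k => (if k < 2 ^ n then wC (cls n k) else 193/200) *
      Wval n (if k < 2 ^ n then k else k - 2 ^ n)

lemma wC_pos (X : Cls) : 0 < wC X := by cases X <;> norm_num [wC]

lemma uC_ge (X : Cls) : 3/4 ≤ uC X := by cases X <;> norm_num [uC]

lemma uC_le (X : Cls) : uC X ≤ 1 := by cases X <;> norm_num [uC]

lemma rC_nonneg (X : Cls) : 0 ≤ rC X := by
  cases X <;> simp [rC] <;> positivity

lemma Wval_pos : ∀ n k, 0 < Wval n k := by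
  intro n
  induction n with
  | zero => intro k; simp only [Wval]; norm_num
  | succ n ih =>
    intro k
    simp only [Wval]
    apply mul_pos ?_ (ih _)
    split
    · exact wC_pos _
    · norm_num

/-- The key numeric inequalities: `Lip(f₀ on ball (rC X)) ≤ wC X ^ 8`. -/
lemma lw8 (X : Cls) : rC X * (3 * rC X + 2) * Real.sqrt 2 / 8 ≤ wC X ^ 8 := by
  cases X
  · -- A
    show (1/32 : ℝ) * (3 * (1/32) + 2) * Real.sqrt 2 / 8 ≤ (23/40) ^ 8
    nlinarith [sqrt2_lt, sqrt2_pos]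
  · -- B
    show Real.sqrt 2 / 4 * (3 * (Real.sqrt 2 / 4) + 2) * Real.sqrt 2 / 8 ≤ (163/200) ^ 8
    nlinarith [sqrt2_lt, sqrt2_pos, sqrt2_sq]
  · -- D
    show (4 + 3 * Real.sqrt 2) / 16 * (3 * ((4 + 3 * Real.sqrt 2) / 16) + 2) * Real.sqrt 2 / 8
        ≤ (87/100) ^ 8
    nlinarith [sqrt2_lt, sqrt2_pos, sqrt2_sq]
  · -- E
    show (1:ℝ) * (3 * 1 + 2) * Real.sqrt 2 / 8 ≤ (197/200) ^ 8
    nlinarith [sqrt2_lt, sqrt2_pos]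
  · -- T
    show (1:ℝ) * (3 * 1 + 2) * Real.sqrt 2 / 8 ≤ (197/200) ^ 8
    nlinarith [sqrt2_lt, sqrt2_pos]

lemma abs_fEx1_le (z : ℂ) (r : ℝ) (hz : norm z ≤ r) :
    norm (fEx 1 z) ≤ (3 * r + 1) / 4 := by
  have h : fEx 1 z = (3 * z + 1) / 4 := by simp [fEx]
  rw [h, norm_div]
  have h4 : norm (4:ℂ) = 4 := by
    rw [show (4:ℂ) = ((4:ℝ):ℂ) by norm_num, Complex.norm_real]; norm_num
  rw [h4]
  gcongr
  calc norm (3 * z + 1) ≤ norm (3 * z) + norm 1 := norm_add_le _ _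
  _ ≤ 3 * r + 1 := by
      rw [norm_mul, norm_one]
      have h3 : norm (3:ℂ) = 3 := by
        rw [show (3:ℂ) = ((3:ℝ):ℂ) by norm_num, Complex.norm_real]; norm_num
      rw [h3]
      linarith

lemma two_mul_succ_le {n k : ℕ} (hn : n ≠ 0) (h : 2 * k < 2 ^ n) : 2 * (k + 1) ≤ 2 ^ n := by
  obtain ⟨m, rfl⟩ : ∃ m, n = m + 1 := ⟨n - 1, by omega⟩
  rw [pow_succ] at h ⊢
  omega

section RangeDiam

variable {G : ℝ → ℂ}

lemma G_range (hGX : Set.MapsTo G (Set.Icc 0 1) {z : ℂ | norm z ≤ 1})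
    (hGeq0 : ∀ t : ℝ, 0 ≤ t → t ≤ 1 / 2 → G t = fEx 0 (G (2 * t)))
    (hGeq1 : ∀ t : ℝ, 1 / 2 ≤ t → t ≤ 1 → G t = fEx 1 (G (2 * t - 1)))
    (n k : ℕ) (hk : k < 2 ^ n) (t : ℝ)
    (h1 : (k : ℝ) / 2 ^ n ≤ t) (h2 : t ≤ ((k : ℝ) + 1) / 2 ^ n) :
    norm (G t) ≤ rC (cls n k) := by
  have hp : (0:ℝ) < 2 ^ n := by positivity
  have hk1 : ((k : ℝ) + 1) ≤ 2 ^ n := by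
    have : (k:ℕ) + 1 ≤ 2 ^ n := hk
    exact_mod_cast this
  have ht0 : 0 ≤ t := le_trans (by positivity) h1
  have ht1 : t ≤ 1 := by
    refine le_trans h2 ?_
    rw [div_le_one hp]
    exact hk1
  rw [cls]
  by_cases hn : n = 0
  · rw [if_pos hn]
    exact Gabs1 hGX ht0 ht1
  rw [if_neg hn]
  by_cases hhalf : 2 * k < 2 ^ n
  · rw [if_pos hhalf]
    have h2k : 2 * ((k:ℝ) + 1) ≤ 2 ^ n := by
      have := two_mul_succ_le hn hhalf
      exact_mod_cast this
    have hth : t ≤ 1 / 2 := by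
      refine le_trans h2 ?_
      rw [div_le_div_iff₀ hp (by norm_num)]
      linarith
    by_cases hq : 4 * (k + 1) ≤ 2 ^ n
    · rw [if_pos hq]
      have hq' : 4 * ((k:ℝ) + 1) ≤ 2 ^ n := by exact_mod_cast hq
      have htq : t ≤ 1 / 4 := by
        refine le_trans h2 ?_
        rw [div_le_div_iff₀ hp (by norm_num)]
        linarith
      exact Ga2 hGX hGeq0 ht0 htq
    · rw [if_neg hq]
      exact Ga1 hGX hGeq0 ht0 hth
  · rw [if_neg hhalf]
    have hge : (2:ℝ) * k ≥ 2 ^ n := by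
      have : 2 ^ n ≤ 2 * k := by omega
      exact_mod_cast this
    have hth : 1 / 2 ≤ t := by
      refine le_trans ?_ h1
      rw [div_le_div_iff₀ (by norm_num) hp]
      linarith
    by_cases hq : 4 * (k + 1) ≤ 3 * 2 ^ n
    · rw [if_pos hq]
      have hq' : 4 * ((k:ℝ) + 1) ≤ 3 * 2 ^ n := by exact_mod_cast hq
      have htq : t ≤ 3 / 4 := by
        refine le_trans h2 ?_
        rw [div_le_div_iff₀ hp (by norm_num)]
        linarith
      rw [hGeq1 t hth ht1]
      have hinner : norm (G (2 * t - 1)) ≤ Real.sqrt 2 / 4 :=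
        Ga1 hGX hGeq0 (by linarith) (by linarith)
      have := abs_fEx1_le (G (2 * t - 1)) (Real.sqrt 2 / 4) hinner
      refine le_trans this ?_
      show (3 * (Real.sqrt 2 / 4) + 1) / 4 ≤ (4 + 3 * Real.sqrt 2) / 16
      nlinarith [sqrt2_pos]
    · rw [if_neg hq]
      exact Gabs1 hGX ht0 ht1

lemma G_diam (hGX : Set.MapsTo G (Set.Icc 0 1) {z : ℂ | norm z ≤ 1})
    (hGeq0 : ∀ t : ℝ, 0 ≤ t → t ≤ 1 / 2 → G t = fEx 0 (G (2 * t)))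
    (hGeq1 : ∀ t : ℝ, 1 / 2 ≤ t → t ≤ 1 → G t = fEx 1 (G (2 * t - 1))) :
    ∀ (n : ℕ) (k : ℕ), k < 2 ^ n → ∀ s t : ℝ,
      (k : ℝ) / 2 ^ n ≤ s → s ≤ ((k : ℝ) + 1) / 2 ^ n →
      (k : ℝ) / 2 ^ n ≤ t → t ≤ ((k : ℝ) + 1) / 2 ^ n →
      norm (G s - G t) ≤ Wval n k ^ 8 := by
  intro n
  induction n with
  | zero =>
    intro k hk s t hs1 hs2 ht1 ht2
    interval_cases k
    simp only [Wval]
    norm_num at hs1 hs2 ht1 ht2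
    have hbs := Gabs1 hGX hs1 hs2
    have hbt := Gabs1 hGX ht1 ht2
    have htri : norm (G s - G t) ≤ norm (G s) + norm (G t) := by
      have := norm_sub_le (G s) (G t)
      simpa using this
    calc norm (G s - G t) ≤ norm (G s) + norm (G t) := htri
    _ ≤ 2 := by linarith
    _ ≤ (11/10 : ℝ) ^ 8 := by norm_num
  | succ n ih =>
    intro k hk s t hs1 hs2 ht1 ht2
    have hp : (0:ℝ) < 2 ^ n := by positivity
    have hp1 : (0:ℝ) < 2 ^ (n+1) := by positivity
    have hpow : (2:ℝ) ^ (n+1) = 2 ^ n * 2 := pow_succ 2 n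
    by_cases hk0 : k < 2 ^ n
    · -- left half, digit 0
      have hk1 : ((k : ℝ) + 1) ≤ 2 ^ n := by
        have h' : k + 1 ≤ 2 ^ n := hk0
        exact_mod_cast h'
      have hs0 : 0 ≤ s := le_trans (by positivity) hs1
      have ht0 : 0 ≤ t := le_trans (by positivity) ht1
      have hsh : s ≤ 1 / 2 := by
        refine le_trans hs2 ?_
        rw [div_le_div_iff₀ hp1 (by norm_num), hpow]
        nlinarith
      have hth : t ≤ 1 / 2 := by
        refine le_trans ht2 ?_
        rw [div_le_div_iff₀ hp1 (by norm_num), hpow]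
        nlinarith
      have hds1 : (k : ℝ) / 2 ^ n ≤ 2 * s := by
        rw [div_le_iff₀ hp]
        rw [div_le_iff₀ hp1, hpow] at hs1
        nlinarith
      have hds2 : 2 * s ≤ ((k : ℝ) + 1) / 2 ^ n := by
        rw [le_div_iff₀ hp]
        rw [le_div_iff₀ hp1, hpow] at hs2
        nlinarith
      have hdt1 : (k : ℝ) / 2 ^ n ≤ 2 * t := by
        rw [div_le_iff₀ hp]
        rw [div_le_iff₀ hp1, hpow] at ht1
        nlinarith
      have hdt2 : 2 * t ≤ ((k : ℝ) + 1) / 2 ^ n := by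
        rw [le_div_iff₀ hp]
        rw [le_div_iff₀ hp1, hpow] at ht2
        nlinarith
      rw [hGeq0 s hs0 hsh, hGeq0 t ht0 hth]
      have hrz := G_range hGX hGeq0 hGeq1 n k hk0 (2*s) hds1 hds2
      have hrw := G_range hGX hGeq0 hGeq1 n k hk0 (2*t) hdt1 hdt2
      have hlip := hlip0 (rC (cls n k)) (G (2*s)) (G (2*t)) hrz hrw
      have hih := ih k hk0 (2*s) (2*t) hds1 hds2 hdt1 hdt2
      have hW : Wval (n+1) k = wC (cls n k) * Wval n k := by
        simp only [Wval, if_pos hk0]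
      rw [hW, mul_pow]
      refine le_trans hlip ?_
      have hd0 : (0:ℝ) ≤ norm (G (2*s) - G (2*t)) := norm_nonneg _
      exact mul_le_mul (lw8 _) hih hd0 (by positivity)
    · -- right half, digit 1
      push_neg at hk0
      have hk2 : ((k:ℝ) + 1) ≤ 2 ^ (n+1) := by exact_mod_cast hk
      have hkg : (2:ℝ) ^ n ≤ k := by exact_mod_cast hk0
      have hs0 : 1/2 ≤ s := by
        refine le_trans ?_ hs1
        rw [div_le_div_iff₀ (by norm_num) hp1, hpow]
        nlinarith
      have ht0 : 1/2 ≤ t := by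
        refine le_trans ?_ ht1
        rw [div_le_div_iff₀ (by norm_num) hp1, hpow]
        nlinarith
      have hs1' : s ≤ 1 := by
        refine le_trans hs2 ?_
        rw [div_le_one hp1]
        exact hk2
      have ht1' : t ≤ 1 := by
        refine le_trans ht2 ?_
        rw [div_le_one hp1]
        exact hk2
      have hcast : ((k - 2 ^ n : ℕ) : ℝ) = (k:ℝ) - 2 ^ n := by
        push_cast [Nat.cast_sub hk0]
        ring
      have hkk : k - 2 ^ n < 2 ^ n := by
        rw [pow_succ] at hk
        omega
      have hds1 : ((k - 2^n : ℕ) : ℝ) / 2 ^ n ≤ 2 * s - 1 := by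
        rw [hcast, div_le_iff₀ hp]
        rw [div_le_iff₀ hp1, hpow] at hs1
        nlinarith
      have hds2 : 2 * s - 1 ≤ (((k - 2^n : ℕ) : ℝ) + 1) / 2 ^ n := by
        rw [hcast, le_div_iff₀ hp]
        rw [le_div_iff₀ hp1, hpow] at hs2
        nlinarith
      have hdt1 : ((k - 2^n : ℕ) : ℝ) / 2 ^ n ≤ 2 * t - 1 := by
        rw [hcast, div_le_iff₀ hp]
        rw [div_le_iff₀ hp1, hpow] at ht1
        nlinarith
      have hdt2 : 2 * t - 1 ≤ (((k - 2^n : ℕ) : ℝ) + 1) / 2 ^ n := by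
        rw [hcast, le_div_iff₀ hp]
        rw [le_div_iff₀ hp1, hpow] at ht2
        nlinarith
      rw [hGeq1 s hs0 hs1', hGeq1 t ht0 ht1']
      rw [hlip1]
      have hih := ih (k - 2^n) hkk (2*s-1) (2*t-1) hds1 hds2 hdt1 hdt2
      have hW : Wval (n+1) k = (193/200) * Wval n (k - 2^n) := by
        simp only [Wval, if_neg (by omega : ¬ k < 2 ^ n)]
      rw [hW, mul_pow]
      have hd0 : (0:ℝ) ≤ norm (G (2*s-1) - G (2*t-1)) := norm_nonneg _
      exact mul_le_mul (by norm_num) hih hd0 (by positivity)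

end RangeDiam

def cls0 : Cls → Cls
  | .A => .A
  | .B => .A
  | _ => .B

def cls1 : Cls → Cls
  | .A => .D
  | .B => .D
  | _ => .E

lemma cls_succ_left (n k : ℕ) (hk : k < 2 ^ n) : cls (n+1) k = cls0 (cls n k) := by
  rcases Nat.eq_zero_or_pos n with hn | hn
  · subst hn
    interval_cases k
    rfl
  have hn0 : n ≠ 0 := by omega
  have hlt : 2 * k < 2 ^ (n+1) := by rw [pow_succ]; omega
  rw [cls, cls, if_neg (by omega : ¬ n + 1 = 0), if_neg hn0, if_pos hlt]
  by_cases hh : 2 * k < 2 ^ n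
  · have h4 : 4 * (k + 1) ≤ 2 ^ (n+1) := by
      have := two_mul_succ_le hn0 hh
      rw [pow_succ]
      omega
    rw [if_pos h4, if_pos hh]
    by_cases hq : 4 * (k + 1) ≤ 2 ^ n
    · rw [if_pos hq]; rfl
    · rw [if_neg hq]; rfl
  · have h4 : ¬ 4 * (k + 1) ≤ 2 ^ (n+1) := by
      rw [pow_succ]
      omega
    rw [if_neg h4, if_neg hh]
    by_cases hq : 4 * (k + 1) ≤ 3 * 2 ^ n
    · rw [if_pos hq]; rfl
    · rw [if_neg hq]; rfl

lemma cls_succ_right (n k : ℕ) (hk : k < 2 ^ n) : cls (n+1) (k + 2 ^ n) = cls1 (cls n k) := by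
  rcases Nat.eq_zero_or_pos n with hn | hn
  · subst hn
    interval_cases k
    rfl
  have hn0 : n ≠ 0 := by omega
  have hlt : ¬ 2 * (k + 2 ^ n) < 2 ^ (n+1) := by rw [pow_succ]; omega
  rw [cls, cls, if_neg (by omega : ¬ n + 1 = 0), if_neg hn0, if_neg hlt]
  by_cases hh : 2 * k < 2 ^ n
  · have h4 : 4 * (k + 2 ^ n + 1) ≤ 3 * 2 ^ (n+1) := by
      have := two_mul_succ_le hn0 hh
      rw [pow_succ]
      omega
    rw [if_pos h4, if_pos hh]
    by_cases hq : 4 * (k + 1) ≤ 2 ^ n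
    · rw [if_pos hq]; rfl
    · rw [if_neg hq]; rfl
  · have h4 : ¬ 4 * (k + 2 ^ n + 1) ≤ 3 * 2 ^ (n+1) := by
      rw [pow_succ]
      omega
    rw [if_neg h4, if_neg hh]
    by_cases hq : 4 * (k + 1) ≤ 3 * 2 ^ n
    · rw [if_pos hq]; rfl
    · rw [if_neg hq]; rfl

lemma cert (X : Cls) : uC (cls0 X) * wC X + uC (cls1 X) * (193/200) ≤ (91/50) * uC X := by
  cases X <;> norm_num [uC, wC, cls0, cls1]

noncomputable def Msum (n : ℕ) : ℝ := ∑ k ∈ Finset.range (2 ^ n), uC (cls n k) * Wval n k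

lemma Msum_le : ∀ n, Msum n ≤ (11/10) * (91/50) ^ n := by
  intro n
  induction n with
  | zero =>
    rw [Msum]
    norm_num
    rw [show cls 0 0 = Cls.T from rfl]
    simp only [Wval, uC]
    norm_num
  | succ n ih =>
    have hsplit : Msum (n+1)
        = ∑ k ∈ Finset.range (2 ^ n),
            (uC (cls (n+1) k) * Wval (n+1) k
              + uC (cls (n+1) (2 ^ n + k)) * Wval (n+1) (2 ^ n + k)) := by
      rw [Msum, show (2:ℕ)^(n+1) = 2^n + 2^n from by rw [pow_succ]; ring, Finset.sum_range_add, ← Finset.sum_add_distrib]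
    rw [hsplit]
    have hterm : ∀ k ∈ Finset.range (2 ^ n),
        uC (cls (n+1) k) * Wval (n+1) k
          + uC (cls (n+1) (2 ^ n + k)) * Wval (n+1) (2 ^ n + k)
        ≤ (91/50) * (uC (cls n k) * Wval n k) := by
      intro k hkmem
      have hk : k < 2 ^ n := Finset.mem_range.1 hkmem
      have hW1 : Wval (n+1) k = wC (cls n k) * Wval n k := by
        simp only [Wval, if_pos hk]
      have hW2 : Wval (n+1) (2 ^ n + k) = (193/200) * Wval n k := by
        have h1 : ¬ (2 ^ n + k) < 2 ^ n := by omega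
        simp only [Wval, if_neg h1]
        congr 2
        omega
      have hc1 := cls_succ_left n k hk
      have hc2 := cls_succ_right n k hk
      rw [hW1, hW2, hc1, show (2:ℕ)^n + k = k + 2^n from by omega, hc2]
      have hWpos := Wval_pos n k
      have hcert := cert (cls n k)
      calc uC (cls0 (cls n k)) * (wC (cls n k) * Wval n k)
            + uC (cls1 (cls n k)) * ((193/200) * Wval n k)
          = (uC (cls0 (cls n k)) * wC (cls n k)
              + uC (cls1 (cls n k)) * (193/200)) * Wval n k := by ring
      _ ≤ ((91/50) * uC (cls n k)) * Wval n k := by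
          apply mul_le_mul_of_nonneg_right hcert hWpos.le
      _ = (91/50) * (uC (cls n k) * Wval n k) := by ring
    calc ∑ k ∈ Finset.range (2 ^ n),
          (uC (cls (n+1) k) * Wval (n+1) k
            + uC (cls (n+1) (2 ^ n + k)) * Wval (n+1) (2 ^ n + k))
        ≤ ∑ k ∈ Finset.range (2 ^ n), (91/50) * (uC (cls n k) * Wval n k) :=
          Finset.sum_le_sum hterm
    _ = (91/50) * Msum n := by rw [Msum, Finset.mul_sum]
    _ ≤ (91/50) * ((11/10) * (91/50) ^ n) := by
        apply mul_le_mul_of_nonneg_left ih (by norm_num)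
    _ = (11/10) * (91/50) ^ (n+1) := by ring

end Machinery

section BC

open Classical in
noncomputable def badF (n : ℕ) : Finset ℕ :=
  (Finset.range (2 ^ n)).filter (fun k => (11/10 : ℝ) * (11/12) ^ n < Wval n k)

def badSet (n : ℕ) : Set ℝ :=
  ⋃ k ∈ badF n, Set.Icc (((k:ℝ) - 1) / 2 ^ n) (((k:ℝ) + 2) / 2 ^ n)

lemma badF_card (n : ℕ) : ((badF n).card : ℝ) * ((3/4) * ((11/10) * (11/12) ^ n))
    ≤ (11/10) * (91/50) ^ n := by
  have h1 : ∀ k ∈ badF n, (3/4) * ((11/10) * (11/12) ^ n) ≤ uC (cls n k) * Wval n k := by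
    intro k hkf
    rw [badF, Finset.mem_filter] at hkf
    obtain ⟨_, hkW⟩ := hkf
    have hu := uC_ge (cls n k)
    have hWpos : (0:ℝ) < (11/10) * (11/12) ^ n := by positivity
    calc (3/4) * ((11/10) * (11/12) ^ n) ≤ (3/4) * Wval n k := by
          apply mul_le_mul_of_nonneg_left hkW.le (by norm_num)
    _ ≤ uC (cls n k) * Wval n k := by
        apply mul_le_mul_of_nonneg_right hu (Wval_pos n k).le
  calc ((badF n).card : ℝ) * ((3/4) * ((11/10) * (11/12) ^ n))
      = ∑ _k ∈ badF n, (3/4) * ((11/10) * (11/12) ^ n) := by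
        rw [Finset.sum_const, nsmul_eq_mul]
  _ ≤ ∑ k ∈ badF n, uC (cls n k) * Wval n k := Finset.sum_le_sum h1
  _ ≤ Msum n := by
      rw [Msum]
      apply Finset.sum_le_sum_of_subset_of_nonneg
      · rw [badF]; exact Finset.filter_subset _ _
      · intro k _ _
        exact le_of_lt (mul_pos (lt_of_lt_of_le (by norm_num) (uC_ge _)) (Wval_pos n k))
  _ ≤ (11/10) * (91/50) ^ n := Msum_le n

lemma badSet_vol (n : ℕ) : volume (badSet n) ≤ ENNReal.ofReal (4 * (273/275) ^ n) := by
  have h1 : volume (badSet n) ≤ ∑ k ∈ badF n, volume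
      (Set.Icc (((k:ℝ) - 1) / 2 ^ n) (((k:ℝ) + 2) / 2 ^ n)) :=
    measure_biUnion_finset_le _ _
  have hvol : ∀ k : ℕ, volume (Set.Icc (((k:ℝ) - 1) / 2 ^ n) (((k:ℝ) + 2) / 2 ^ n))
      = ENNReal.ofReal (3 / 2 ^ n) := by
    intro k
    rw [Real.volume_Icc]
    congr 1
    field_simp
    ring
  have h2 : ∑ k ∈ badF n, volume (Set.Icc (((k:ℝ) - 1) / 2 ^ n) (((k:ℝ) + 2) / 2 ^ n))
      = ((badF n).card : ℝ≥0∞) * ENNReal.ofReal (3 / 2 ^ n) := by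
    rw [Finset.sum_congr rfl (fun k _ => hvol k), Finset.sum_const, nsmul_eq_mul]
  refine le_trans h1 (le_trans (le_of_eq h2) ?_)
  have hcard : ((badF n).card : ℝ) ≤ (4/3) * ((91/50) ^ n / ((11/12) ^ n)) := by
    have hb := badF_card n
    have hpos : (0:ℝ) < (3/4) * ((11/10) * (11/12) ^ n) := by positivity
    rw [← le_div_iff₀ hpos] at hb
    refine le_trans hb (le_of_eq ?_)
    have hp12 : ((11:ℝ)/12) ^ n ≠ 0 := by positivity
    field_simp
  calc ((badF n).card : ℝ≥0∞) * ENNReal.ofReal (3 / 2 ^ n)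
      = ENNReal.ofReal (((badF n).card : ℝ) * (3 / 2 ^ n)) := by
        rw [ENNReal.ofReal_mul (by positivity)]
        congr 1
        rw [ENNReal.ofReal_natCast]
  _ ≤ ENNReal.ofReal (4 * (273/275) ^ n) := by
      apply ENNReal.ofReal_le_ofReal
      have h3 : (0:ℝ) < 2 ^ n := by positivity
      calc ((badF n).card : ℝ) * (3 / 2 ^ n)
          ≤ ((4/3) * ((91/50) ^ n / ((11/12) ^ n))) * (3 / 2 ^ n) := by
            apply mul_le_mul_of_nonneg_right hcard (by positivity)
      _ = 4 * ((91/50) ^ n / (11/12) ^ n / 2 ^ n) := by ring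
      _ = 4 * (273/275) ^ n := by
          rw [← div_pow, ← div_pow]
          norm_num

lemma badSet_ae : ∀ᵐ t : ℝ, {n : ℕ | t ∈ badSet n}.Finite := by
  apply MeasureTheory.ae_finite_setOf_mem
  have hle : ∑' n, volume (badSet n) ≤ ∑' n : ℕ, ENNReal.ofReal (4 * (273/275) ^ n) :=
    ENNReal.tsum_le_tsum badSet_vol
  have heq : ∑' n : ℕ, ENNReal.ofReal (4 * (273/275:ℝ) ^ n)
      = ENNReal.ofReal 4 * ∑' n : ℕ, (ENNReal.ofReal (273/275)) ^ n := by
    rw [← ENNReal.tsum_mul_left]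
    congr 1
    funext n
    rw [ENNReal.ofReal_mul (by norm_num), ENNReal.ofReal_pow (by norm_num)]
  intro hcon
  rw [hcon] at hle
  rw [heq, ENNReal.tsum_geometric] at hle
  have h4 : ENNReal.ofReal 4 ≠ ⊤ := ENNReal.ofReal_ne_top
  have hq : (1 : ℝ≥0∞) - ENNReal.ofReal (273/275) ≠ 0 := by
    have : ENNReal.ofReal (273/275) < 1 := by
      rw [← ENNReal.ofReal_one]
      exact ENNReal.ofReal_lt_ofReal_iff_of_nonneg (by norm_num) |>.2 (by norm_num)
    simp only [ne_eq, tsub_eq_zero_iff_le, not_le]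
    exact this
  have : ENNReal.ofReal 4 * (1 - ENNReal.ofReal (273/275))⁻¹ ≠ ⊤ :=
    ENNReal.mul_ne_top h4 (by rwa [ne_eq, ENNReal.inv_eq_top])
  exact this (top_le_iff.1 hle)

section DerivGood

variable {G : ℝ → ℂ}

set_option maxHeartbeats 1000000 in
lemma deriv_zero_at_good (hGX : Set.MapsTo G (Set.Icc 0 1) {z : ℂ | norm z ≤ 1})
    (hGeq0 : ∀ t : ℝ, 0 ≤ t → t ≤ 1 / 2 → G t = fEx 0 (G (2 * t)))
    (hGeq1 : ∀ t : ℝ, 1 / 2 ≤ t → t ≤ 1 → G t = fEx 1 (G (2 * t - 1)))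
    (t : ℝ) (ht0 : 0 < t) (ht1 : t < 1)
    (hfin : {n : ℕ | t ∈ badSet n}.Finite) :
    HasDerivWithinAt G 0 (Set.Icc (0:ℝ) 1) t := by
  obtain ⟨N, hN⟩ : ∃ N : ℕ, ∀ n, N ≤ n → t ∉ badSet n := by
    obtain ⟨N, hN⟩ := hfin.bddAbove
    refine ⟨N + 1, fun n hn hmem => ?_⟩
    have := hN hmem
    omega
  rw [hasDerivWithinAt_iff_tendsto_slope, Metric.tendsto_nhdsWithin_nhds]
  intro ε hε
  obtain ⟨m, hmN, hmε⟩ : ∃ m : ℕ, N ≤ m ∧ 9 * (2 * (11/12:ℝ) ^ 8) ^ m < ε := by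
    have htend : Tendsto (fun m : ℕ => 9 * (2 * (11/12:ℝ) ^ 8) ^ m) atTop (nhds 0) := by
      have h0 := tendsto_pow_atTop_nhds_zero_of_lt_one
        (show (0:ℝ) ≤ 2 * (11/12) ^ 8 by norm_num)
        (show 2 * (11/12:ℝ) ^ 8 < 1 by norm_num)
      simpa using h0.const_mul 9
    have hev := htend.eventually_lt_const hε
    obtain ⟨m, hm1, hm2⟩ := (hev.and (eventually_ge_atTop N)).exists
    exact ⟨m, hm2, hm1⟩
  refine ⟨((2:ℝ) ^ (m + 1))⁻¹, by positivity, ?_⟩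
  intro s hs hdist
  obtain ⟨hsIcc, hsne'⟩ := hs
  have hsne : s ≠ t := by simpa using hsne'
  have hs0 : (0:ℝ) ≤ s := hsIcc.1
  have hs1 : s ≤ 1 := hsIcc.2
  rw [Real.dist_eq] at hdist
  set d := |s - t| with hd
  have hd0 : 0 < d := abs_pos.2 (sub_ne_zero.2 hsne)
  have hdlt : d < ((2:ℝ) ^ (m + 1))⁻¹ := hdist
  -- find the scale n with 2^{-(n+1)} ≤ d < 2^{-n}
  classical
  have hexP : ∃ j : ℕ, ((2:ℝ) ^ j)⁻¹ ≤ d := by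
    obtain ⟨j, hj⟩ := exists_pow_lt_of_lt_one hd0 (show (1:ℝ)/2 < 1 by norm_num)
    refine ⟨j, le_of_lt ?_⟩
    calc ((2:ℝ) ^ j)⁻¹ = ((1:ℝ)/2) ^ j := by rw [one_div, inv_pow]
    _ < d := hj
  set j := Nat.find hexP with hjdef
  have hj1 : ((2:ℝ) ^ j)⁻¹ ≤ d := Nat.find_spec hexP
  have hj0 : j ≠ 0 := by
    intro h
    rw [h] at hj1
    simp at hj1
    have hle : ((2:ℝ) ^ (m+1))⁻¹ ≤ 1 := by
      rw [inv_le_one_iff₀]; right; exact one_le_pow₀ (by norm_num)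
    linarith
  obtain ⟨n, hjn⟩ : ∃ n, j = n + 1 := ⟨j - 1, by omega⟩
  have hn1 : ((2:ℝ) ^ (n+1))⁻¹ ≤ d := by rw [← hjn]; exact hj1
  have hn2 : d < ((2:ℝ) ^ n)⁻¹ := by
    have := Nat.find_min hexP (show n < j by omega)
    push_neg at this
    exact this
  have hnm : m + 1 ≤ n := by
    by_contra hcon
    push_neg at hcon
    have h1 : ((2:ℝ) ^ (m+1))⁻¹ ≤ ((2:ℝ) ^ (n+1))⁻¹ := by
      apply inv_anti₀ (by positivity)
      exact pow_le_pow_right₀ (by norm_num) (by omega)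
    linarith
  have hp : (0:ℝ) < 2 ^ n := by positivity
  -- the dyadic interval containing t
  set kn : ℕ := (⌊(2:ℝ) ^ n * t⌋).toNat with hkndef
  have hfl0 : 0 ≤ ⌊(2:ℝ) ^ n * t⌋ := Int.floor_nonneg.2 (by positivity)
  have hknr : (kn : ℝ) = ((⌊(2:ℝ) ^ n * t⌋ : ℤ) : ℝ) := by
    rw [hkndef]
    exact_mod_cast Int.toNat_of_nonneg hfl0
  have hknle : (kn : ℝ) ≤ 2 ^ n * t := by rw [hknr]; exact Int.floor_le _
  have hknlt : 2 ^ n * t < (kn : ℝ) + 1 := by rw [hknr]; exact Int.lt_floor_add_one _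
  have hkn2 : kn < 2 ^ n := by
    have h1 : (kn : ℝ) < 2 ^ n := by nlinarith
    have h2 : (kn : ℝ) < ((2 ^ n : ℕ) : ℝ) := by push_cast; exact h1
    exact_mod_cast h2
  have htI1 : (kn : ℝ) / 2 ^ n ≤ t := by rw [div_le_iff₀ hp]; nlinarith
  have htI2 : t ≤ ((kn : ℝ) + 1) / 2 ^ n := by rw [le_div_iff₀ hp]; nlinarith
  have hgood : ∀ k : ℕ, k < 2 ^ n → ((k:ℝ) - 1) / 2 ^ n ≤ t → t ≤ ((k:ℝ) + 2) / 2 ^ n →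
      Wval n k ≤ (11/10) * (11/12) ^ n := by
    intro k hk hk1 hk2
    by_contra hcon
    push_neg at hcon
    apply hN n (by omega)
    simp only [badSet, Set.mem_iUnion]
    exact ⟨k, Finset.mem_filter.2 ⟨Finset.mem_range.2 hk, hcon⟩, hk1, hk2⟩
  set C : ℝ := (11/10) * (11/12) ^ n with hCdef
  have hC0 : 0 ≤ C := by positivity
  have hWbound : ∀ k : ℕ, k < 2 ^ n → ((k:ℝ) - 1) / 2 ^ n ≤ t → t ≤ ((k:ℝ) + 2) / 2 ^ n →
      Wval n k ^ 8 ≤ C ^ 8 := by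
    intro k hk h1 h2
    exact pow_le_pow_left₀ (Wval_pos n k).le (hgood k hk h1 h2) 8
  have hdinv : d < ((2:ℝ) ^ n)⁻¹ := hn2
  have hds : |s - t| < ((2:ℝ) ^ n)⁻¹ := hdinv
  have habs1 : s - t ≤ d := le_abs_self _
  have habs2 : t - s ≤ d := by rw [hd, abs_sub_comm]; exact le_abs_self _
  have hdiam : norm (G s - G t) ≤ 2 * C ^ 8 := by
    have hWkn : Wval n kn ^ 8 ≤ C ^ 8 := by
      apply hWbound kn hkn2
      · refine le_trans ?_ htI1
        gcongr
        linarith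
      · refine le_trans htI2 ?_
        gcongr <;> linarith
    rcases le_or_gt s (((kn:ℝ) + 1) / 2 ^ n) with hsle | hsgt
    · rcases le_or_gt ((kn:ℝ) / 2 ^ n) s with hsge | hslt
      · -- s in the same dyadic interval as t
        have hdd := G_diam hGX hGeq0 hGeq1 n kn hkn2 s t hsge hsle htI1 htI2
        have h8 : (0:ℝ) ≤ C ^ 8 := by positivity
        linarith [le_trans hdd hWkn]
      · -- s in the left neighbour interval
        have hkn1 : 1 ≤ kn := by
          by_contra hcon
          push_neg at hcon
          interval_cases kn
          · simp at hslt
            linarith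
        have hcast : ((kn - 1 : ℕ) : ℝ) = (kn : ℝ) - 1 := by
          push_cast [Nat.cast_sub hkn1]
          ring
        have hsub : ((kn : ℝ) - 1) / 2 ^ n = (kn : ℝ) / 2 ^ n - ((2:ℝ) ^ n)⁻¹ := by
          field_simp
        have hsge' : ((kn : ℝ) - 1) / 2 ^ n ≤ s := by
          rw [hsub]
          linarith
        have hWk' : Wval n (kn - 1) ^ 8 ≤ C ^ 8 := by
          apply hWbound (kn - 1) (by omega)
          · rw [hcast]
            refine le_trans ?_ htI1
            rw [div_le_div_iff₀ hp hp]
            nlinarith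
          · rw [hcast]
            refine le_trans htI2 ?_
            rw [div_le_div_iff₀ hp hp]
            nlinarith
        have hq1 : ((kn - 1 : ℕ) : ℝ) / 2 ^ n ≤ s := by rw [hcast]; exact hsge'
        have hrfl : (((kn - 1 : ℕ) : ℝ) + 1) / 2 ^ n = (kn : ℝ) / 2 ^ n := by
          rw [hcast]; ring_nf
        have hq2 : s ≤ (((kn - 1 : ℕ) : ℝ) + 1) / 2 ^ n := by
          rw [hrfl]; exact hslt.le
        have hq3 : ((kn - 1 : ℕ) : ℝ) / 2 ^ n ≤ (kn : ℝ) / 2 ^ n := by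
          rw [hcast, hsub]
          have := inv_pos.2 hp
          linarith
        have hq4 : (kn : ℝ) / 2 ^ n ≤ (((kn - 1 : ℕ) : ℝ) + 1) / 2 ^ n := by
          rw [hrfl]
        have hd1 := G_diam hGX hGeq0 hGeq1 n (kn - 1) (by omega) s ((kn : ℝ) / 2 ^ n)
          hq1 hq2 hq3 hq4
        have hq5 : (kn : ℝ) / 2 ^ n ≤ ((kn : ℝ) + 1) / 2 ^ n := by gcongr; linarith
        have hd2 := G_diam hGX hGeq0 hGeq1 n kn hkn2 ((kn : ℝ) / 2 ^ n) t
          (le_refl _) hq5 htI1 htI2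
        set p : ℝ := (kn : ℝ) / 2 ^ n with hpdef
        have htri : norm (G s - G t)
            ≤ norm (G s - G p) + norm (G p - G t) := by
          have := norm_sub_le_norm_sub_add_norm_sub (G s) (G p) (G t)
          simpa using this
        calc norm (G s - G t)
            ≤ norm (G s - G p) + norm (G p - G t) := htri
        _ ≤ Wval n (kn - 1) ^ 8 + Wval n kn ^ 8 := add_le_add hd1 hd2
        _ ≤ C ^ 8 + C ^ 8 := add_le_add hWk' hWkn
        _ = 2 * C ^ 8 := by ring
    · -- s in the right neighbour interval
      have hkn1' : kn + 1 < 2 ^ n := by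
        by_contra hcon
        push_neg at hcon
        have heq : ((kn : ℝ) + 1) / 2 ^ n ≥ 1 := by
          have h1 : ((2:ℕ) ^ n : ℝ) ≤ ((kn : ℝ) + 1) := by
            push_cast
            have : (2:ℕ) ^ n ≤ kn + 1 := hcon
            exact_mod_cast this
          rw [ge_iff_le, le_div_iff₀ hp]
          push_cast at h1 ⊢
          linarith
        linarith
      have hcast : ((kn + 1 : ℕ) : ℝ) = (kn : ℝ) + 1 := by push_cast; ring
      have hsle' : s ≤ ((kn : ℝ) + 2) / 2 ^ n := by
        have hsub : ((kn : ℝ) + 2) / 2 ^ n = ((kn : ℝ) + 1) / 2 ^ n + ((2:ℝ) ^ n)⁻¹ := by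
          field_simp
          ring
        rw [hsub]
        linarith
      have hWk' : Wval n (kn + 1) ^ 8 ≤ C ^ 8 := by
        apply hWbound (kn + 1) hkn1'
        · rw [hcast]
          refine le_trans ?_ htI1
          rw [div_le_div_iff₀ hp hp]
          nlinarith
        · rw [hcast]
          refine le_trans htI2 ?_
          rw [div_le_div_iff₀ hp hp]
          nlinarith
      have hq1 : ((kn + 1 : ℕ) : ℝ) / 2 ^ n ≤ s := by rw [hcast]; exact hsgt.le
      have hrfl : (((kn + 1 : ℕ) : ℝ) + 1) / 2 ^ n = ((kn : ℝ) + 2) / 2 ^ n := by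
        rw [hcast]; ring_nf
      have hq2 : s ≤ (((kn + 1 : ℕ) : ℝ) + 1) / 2 ^ n := by
        rw [hrfl]; exact hsle'
      have hq3 : ((kn + 1 : ℕ) : ℝ) / 2 ^ n ≤ ((kn : ℝ) + 1) / 2 ^ n := by
        rw [hcast]
      have hq4 : ((kn : ℝ) + 1) / 2 ^ n ≤ (((kn + 1 : ℕ) : ℝ) + 1) / 2 ^ n := by
        rw [hrfl]
        gcongr
        linarith
      have hd1 := G_diam hGX hGeq0 hGeq1 n (kn + 1) hkn1' s (((kn : ℝ) + 1) / 2 ^ n)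
        hq1 hq2 hq3 hq4
      have hq5 : (kn : ℝ) / 2 ^ n ≤ ((kn : ℝ) + 1) / 2 ^ n := by gcongr; linarith
      have hd2 := G_diam hGX hGeq0 hGeq1 n kn hkn2 (((kn : ℝ) + 1) / 2 ^ n) t
        hq5 (le_refl _) htI1 htI2
      set p : ℝ := ((kn : ℝ) + 1) / 2 ^ n with hpdef
      have htri : norm (G s - G t)
          ≤ norm (G s - G p) + norm (G p - G t) := by
        have := norm_sub_le_norm_sub_add_norm_sub (G s) (G p) (G t)
        simpa using this
      calc norm (G s - G t)
          ≤ norm (G s - G p) + norm (G p - G t) := htri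
      _ ≤ Wval n (kn + 1) ^ 8 + Wval n kn ^ 8 := add_le_add hd1 hd2
      _ ≤ C ^ 8 + C ^ 8 := add_le_add hWk' hWkn
      _ = 2 * C ^ 8 := by ring
  -- conclude: slope bound
  have hslope : dist (slope G t s) 0 = d⁻¹ * norm (G s - G t) := by
    rw [dist_zero_right, slope]
    rw [norm_smul, norm_inv, Real.norm_eq_abs, ← hd]
    rw [vsub_eq_sub]
  rw [hslope]
  have hdinv' : d⁻¹ ≤ 2 ^ (n + 1) := by
    rw [inv_le_comm₀ hd0 (by positivity)]
    exact hn1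
  have habs0 : (0:ℝ) ≤ norm (G s - G t) := norm_nonneg _
  calc d⁻¹ * norm (G s - G t) ≤ 2 ^ (n + 1) * (2 * C ^ 8) := by
        apply mul_le_mul hdinv' hdiam habs0 (by positivity)
  _ = 4 * (11/10) ^ 8 * (2 ^ n * ((11/12) ^ 8) ^ n) := by
      rw [hCdef, mul_pow, ← pow_mul, ← pow_mul, pow_succ]
      ring
  _ = 4 * (11/10) ^ 8 * (2 * (11/12) ^ 8) ^ n := by rw [mul_pow]
  _ ≤ 9 * (2 * (11/12) ^ 8) ^ n := by
      apply mul_le_mul_of_nonneg_right (by norm_num) (by positivity)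
  _ ≤ 9 * (2 * (11/12) ^ 8) ^ m := by
      apply mul_le_mul_of_nonneg_left ?_ (by norm_num)
      apply pow_le_pow_of_le_one (by norm_num) (by norm_num) (by omega)
  _ < ε := hmε

end DerivGood

end BC

/-- **Example 2.4.** Let `X = {z : |z| ≤ 1}`, `f₀(z) = z²(z+i)/(4(1+i))`,
`f₁(z) = (3z+1)/4`, and let `G : [0,1] → X` be the unique continuous solution of
`G(t) = f₀(G(2t))` for `0 ≤ t ≤ 1/2` and `G(t) = f₁(G(2t-1))` for `1/2 ≤ t ≤ 1`. Then:
(a) `|G(t)| ≤ √2/4` on `[0,1/2]` and `|G(t)| ≤ 2⁻⁵` on `[0,1/4]`;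
(b) `α = (1/2)∫₀¹ -log₂(9|G(t)|(3|G(t)|+2)/(16√2)) dt
      ≥ 9/4 - (log₂ 15)/2 - (1/2)∫₀¹ log₂|G(t)| dt > 1`;
(c) consequently the Fréchet derivative of `G` exists and is zero Lebesgue-a.e. -/
theorem deRham_example_complex_cubic (G : ℝ → ℂ)
    (hGc : ContinuousOn G (Set.Icc 0 1))
    (hGX : Set.MapsTo G (Set.Icc 0 1) {z : ℂ | norm z ≤ 1})
    (hGeq0 : ∀ t : ℝ, 0 ≤ t → t ≤ 1 / 2 → G t = fEx 0 (G (2 * t)))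
    (hGeq1 : ∀ t : ℝ, 1 / 2 ≤ t → t ≤ 1 → G t = fEx 1 (G (2 * t - 1)))
    (hG0 : G 0 = 0) (hG1 : G 1 = 1) :
    (∀ t ∈ Set.Icc (0 : ℝ) (1 / 2), norm (G t) ≤ Real.sqrt 2 / 4) ∧
    (∀ t ∈ Set.Icc (0 : ℝ) (1 / 4), norm (G t) ≤ ((2 : ℝ) ^ (5 : ℕ))⁻¹) ∧
    alphaEx G = (1 / 2) * ∫⁻ t in Set.Ico (0 : ℝ) 1,
      negLogbE 2 (9 * norm (G t) * (3 * norm (G t) + 2) /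
        (16 * Real.sqrt 2)) ∧
    ENNReal.ofReal (9 / 4 - Real.logb 2 15 / 2) +
        (1 / 2) * ∫⁻ t in Set.Ico (0 : ℝ) 1, negLogbE 2 (norm (G t))
      ≤ alphaEx G ∧
    1 < alphaEx G ∧
    ∀ᵐ t ∂(volume.restrict (Set.Ioo (0 : ℝ) 1)),
      HasDerivWithinAt G 0 (Set.Icc (0 : ℝ) 1) t := by
  have hTop := alphaEx_top hGX hGeq0
  refine ⟨?_, ?_, ?_, ?_, ?_, ?_⟩
  · intro t ht
    exact Ga1 hGX hGeq0 ht.1 ht.2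
  · intro t ht
    have h := Ga2 hGX hGeq0 ht.1 ht.2
    norm_num
    linarith
  · rw [hTop, rhs_top hGX hGeq0, ENNReal.mul_top (by norm_num)]
  · rw [hTop]
    exact le_top
  · rw [hTop]
    exact ENNReal.one_lt_top
  · have h1 : ∀ᵐ t ∂(volume.restrict (Set.Ioo (0:ℝ) 1)), {n : ℕ | t ∈ badSet n}.Finite :=
      ae_restrict_of_ae badSet_ae
    have h2 : ∀ᵐ t ∂(volume.restrict (Set.Ioo (0:ℝ) 1)), t ∈ Set.Ioo (0:ℝ) 1 :=
      ae_restrict_mem measurableSet_Ioo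
    filter_upwards [h1, h2] with t hfin htm
    exact deriv_zero_at_good hGX hGeq0 hGeq1 t htm.1 htm.2 hfin
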